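/- Let G be a countable linearly ordered group and let τ be a locally compact Hausdorff topology on 𝓑(G) such that for every s ∈ 𝓑(G) the left translation x ↦ s·x and the right translation x ↦ x·s are continuous. Then the topological space (𝓑(G), τ) is discrete. -/

import Mathlib

/-- The multiplication of the bicyclic extension `𝓑(G) = G × G` of a linearly ordered
group `G`: `(a,b)·(c,d) = (c·b⁻¹·a, d)` if `b < c`; `(a,d)` if `b = c`;
`(a, b·c⁻¹·d)` if `b > c`. -/
def bmul {G : Type*} [Group G] [LinearOrder G] (s t : G × G) : G × G :=
  if s.2 < t.1 then (t.1 * s.2⁻¹ * s.1, t.2)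
  else if s.2 = t.1 then (s.1, t.2)
  else (s.1, s.2 * t.1⁻¹ * t.2)

section Aux
variable {G : Type*} [Group G] [LinearOrder G]
    [CovariantClass G G (· * ·) (· ≤ ·)]
    [CovariantClass G G (Function.swap (· * ·)) (· ≤ ·)]

lemma lt_aux {a m : G} (ham : a < m) (b : G) : b < m * a⁻¹ * b := by
  have h1 : a * a⁻¹ < m * a⁻¹ := mul_lt_mul_left ham a⁻¹
  rw [mul_inv_cancel] at h1
  calc b = 1 * b := (one_mul b).symm
  _ < m * a⁻¹ * b := mul_lt_mul_left h1 b

lemma fiberL {a b m n : G} (ham : a < m) (x : G × G) :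
    bmul (a, b) x = (m, n) ↔ x = (m * a⁻¹ * b, n) := by
  obtain ⟨c, d⟩ := x
  rcases lt_trichotomy b c with h | h | h
  · show (if b < c then _ else _) = _ ↔ _
    rw [if_pos h]
    simp only [Prod.mk.injEq]
    constructor
    · intro h12
      refine ⟨?_, h12.2⟩
      rw [← h12.1]; group
    · intro h12
      rw [h12.1]
      exact ⟨by group, h12.2⟩
  · subst h
    show (if b < b then _ else if b = b then _ else _) = _ ↔ _
    rw [if_neg (lt_irrefl b), if_pos rfl]
    simp only [Prod.mk.injEq]
    constructor
    · intro h12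
      exact absurd h12.1 (ne_of_lt ham)
    · intro h12
      exact absurd h12.1 (ne_of_lt (lt_aux ham b))
  · show (if b < c then _ else if b = c then _ else _) = _ ↔ _
    rw [if_neg (not_lt.mpr h.le), if_neg (ne_of_gt h)]
    simp only [Prod.mk.injEq]
    constructor
    · intro h12
      exact absurd h12.1 (ne_of_lt ham)
    · intro h12
      exact absurd h12.1 (ne_of_lt (h.trans (lt_aux ham b)))

lemma fiberR {c d m n : G} (hdn : d < n) (x : G × G) :
    bmul x (c, d) = (m, n) ↔ x = (m, n * d⁻¹ * c) := by
  obtain ⟨p, q⟩ := x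
  rcases lt_trichotomy q c with h | h | h
  · show (if q < c then _ else _) = _ ↔ _
    rw [if_pos h]
    simp only [Prod.mk.injEq]
    constructor
    · intro h12
      exact absurd h12.2 (ne_of_lt hdn)
    · intro h12
      exact absurd h12.2 (ne_of_lt (h.trans (lt_aux hdn c)))
  · subst h
    show (if q < q then _ else if q = q then _ else _) = _ ↔ _
    rw [if_neg (lt_irrefl q), if_pos rfl]
    simp only [Prod.mk.injEq]
    constructor
    · intro h12
      exact absurd h12.2 (ne_of_lt hdn)
    · intro h12
      exact absurd h12.2 (ne_of_lt (lt_aux hdn q))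
  · show (if q < c then _ else if q = c then _ else _) = _ ↔ _
    rw [if_neg (not_lt.mpr h.le), if_neg (ne_of_gt h)]
    simp only [Prod.mk.injEq]
    constructor
    · intro h12
      refine ⟨h12.1, ?_⟩
      rw [← h12.2]; group
    · intro h12
      rw [h12.2]
      exact ⟨h12.1, by group⟩

end Aux

/-- Corollary 3.3 for `𝓑(G)`: for a countable linearly ordered group `G`, every
locally compact Hausdorff topology on `𝓑(G)` with separately continuous
multiplication is discrete. -/
theorem locally_compact_implies_discrete {G : Type*} [Group G] [LinearOrder G]
    [CovariantClass G G (· * ·) (· ≤ ·)]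
    [CovariantClass G G (Function.swap (· * ·)) (· ≤ ·)]
    [Countable G]
    [TopologicalSpace (G × G)] [T2Space (G × G)] [WeaklyLocallyCompactSpace (G × G)]
    (hl : ∀ s : G × G, Continuous fun x : G × G => bmul s x)
    (hr : ∀ s : G × G, Continuous fun x : G × G => bmul x s) :
    DiscreteTopology (G × G) := by
  rw [discreteTopology_iff_isOpen_singleton]
  rcases subsingleton_or_nontrivial G with hs | hn
  · intro x
    have : ({x} : Set (G × G)) = Set.univ :=
      Set.eq_univ_of_forall fun y => Set.mem_singleton_iff.mpr (Subsingleton.elim y x)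
    rw [this]; exact isOpen_univ
  · -- there is an isolated point, by Baire category
    have hiso : ∃ u : G × G, IsOpen ({u} : Set (G × G)) := by
      obtain ⟨u, y, hy⟩ := nonempty_interior_of_iUnion_of_closed
        (f := fun u : G × G => ({u} : Set (G × G))) (fun u => isClosed_singleton)
        (Set.iUnion_of_singleton _)
      refine ⟨u, ?_⟩
      have hyu : y = u := by
        have : y ∈ ({u} : Set (G × G)) := interior_subset hy
        exact this
      have : interior ({u} : Set (G × G)) = {u} :=
        Set.Subset.antisymm interior_subset (by rintro z rfl; exact hyu ▸ hy)
      rw [← this]; exact isOpen_interior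
    obtain ⟨⟨m, n⟩, hu⟩ := hiso
    obtain ⟨c0, hc0⟩ : ∃ c0 : G, c0 < 1 := by
      obtain ⟨g, hg⟩ := exists_ne (1 : G)
      rcases hg.lt_or_gt with h | h
      · exact ⟨g, h⟩
      · exact ⟨g⁻¹, inv_lt_one'.mpr h⟩
    rintro ⟨p, q⟩
    have ham : c0 * m < m := by
      calc c0 * m < 1 * m := mul_lt_mul_left hc0 m
      _ = m := one_mul m
    have hdn : c0 * n < n := by
      calc c0 * n < 1 * n := mul_lt_mul_left hc0 n
      _ = n := one_mul n
    set a := c0 * m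
    set d := c0 * n
    set b := a * m⁻¹ * p with hb
    set c := d * n⁻¹ * q with hc
    have hg : Continuous fun x : G × G => bmul (bmul (a, b) x) (c, d) :=
      (hr (c, d)).comp (hl (a, b))
    have hqeq : n * d⁻¹ * c = q := by rw [hc]; group
    have hpeq : m * a⁻¹ * b = p := by rw [hb]; group
    have key : ((fun x : G × G => bmul (bmul (a, b) x) (c, d)) ⁻¹'
        ({(m, n)} : Set (G × G))) = {(p, q)} := by
      ext x
      simp only [Set.mem_preimage, Set.mem_singleton_iff]
      rw [fiberR hdn, hqeq, fiberL ham, hpeq]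
    have := hu.preimage hg
    rw [key] at this
    exact this
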